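/- Let R be a finite ring, m, n, M positive integers, and H an m×n matrix over R. For each row index j let I_j denote the support of row j of H, and assume that for every j and every i ∈ I_j the entry H_{j,i} is not a left zero-divisor. For each j and each i ∈ I_j let π_{j,i} be a permutation of {1,…,M}, and let p : {1,…,n} × {1,…,M} → R satisfy, for every j and every t ∈ {1,…,M}, Σ_{i ∈ I_j} H_{j,i} · p(i, π_{j,i}(t)) = 0. For i ∈ {1,…,n} and α ∈ R set f_i^{(α)} = (#{ t ∈ {1,…,M} : p(i,t) = α })/M ∈ ℝ. Then for every row index j and every ℓ ∈ I_j, Σ_{i ∈ I_j \ {ℓ}} Σ_{b ∈ R, b ≠ 0} f_i^{(b)} ≥ Σ_{b ∈ R, b ≠ 0} f_ℓ^{(b)}. -/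

import Mathlib

open Finset

/-- Corollary (pseudocodeword counting inequality, normalized form):
for a graph-cover pseudocodeword `p` of the code with parity-check matrix `H`
over a finite ring `R` (the `M`-cover being encoded by the permutations `π j i`),
whose parity-check entries on their supports are not left zero-divisors,
the normalized pseudocodeword matrix entries `f i α = #{t : p i t = α} / M`
satisfy, for every check `j` and every `ℓ` in the support of row `j`,
`∑_{i ∈ I_j \ {ℓ}} ∑_{b ≠ 0} f i b ≥ ∑_{b ≠ 0} f ℓ b`. -/
theorem normalized_pseudocodeword_matrix_check_inequality
    {R : Type*} [Ring R] [Fintype R] [DecidableEq R]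
    {m n M : ℕ} (hm : 0 < m) (hn : 0 < n) (hM : 0 < M)
    (H : Matrix (Fin m) (Fin n) R)
    (hnzd : ∀ j i, H j i ≠ 0 → ∀ r : R, H j i * r = 0 → r = 0)
    (π : Fin m → Fin n → Equiv.Perm (Fin M))
    (p : Fin n → Fin M → R)
    (hp : ∀ j t, ∑ i ∈ univ.filter (fun i => H j i ≠ 0), H j i * p i ((π j i) t) = 0)
    (f : Fin n → R → ℝ)
    (hf : ∀ i α, f i α = ((univ.filter (fun t : Fin M => p i t = α)).card : ℝ) / M)
    (j : Fin m) (ℓ : Fin n) (hℓ : H j ℓ ≠ 0) :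
    ∑ i ∈ (univ.filter (fun i => H j i ≠ 0)).erase ℓ,
        ∑ b ∈ univ.filter (fun b : R => b ≠ 0), f i b
      ≥ ∑ b ∈ univ.filter (fun b : R => b ≠ 0), f ℓ b := by
  classical
  set I := univ.filter (fun i => H j i ≠ 0) with hI
  have hℓI : ℓ ∈ I := by simp [hI, hℓ]
  have key : ∀ i : Fin n, ∑ b ∈ univ.filter (fun b : R => b ≠ 0), f i b
      = ((univ.filter (fun t : Fin M => p i t ≠ 0)).card : ℝ) / M := by
    intro i
    have hcard : (univ.filter (fun t : Fin M => p i t ≠ 0)).card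
        = ∑ b ∈ univ.filter (fun b : R => b ≠ 0),
            (univ.filter (fun t : Fin M => p i t = b)).card := by
      rw [Finset.card_eq_sum_card_fiberwise (f := fun t => p i t)
        (t := univ.filter (fun b : R => b ≠ 0))]
      · apply Finset.sum_congr rfl
        intro b hb
        simp only [mem_filter, mem_univ, true_and] at hb
        congr 1
        ext t
        simp only [mem_filter, mem_univ, true_and]
        constructor
        · rintro ⟨_, h2⟩; exact h2
        · intro h2; exact ⟨by rw [h2]; exact hb, h2⟩
      · intro t ht; simp only [mem_coe, mem_filter, mem_univ, true_and] at ht ⊢; exact ht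
    simp only [hf]
    rw [← Finset.sum_div, ← Nat.cast_sum, ← hcard]
  have hperm : ∀ i : Fin n, (univ.filter (fun t : Fin M => p i ((π j i) t) ≠ 0)).card
      = (univ.filter (fun t : Fin M => p i t ≠ 0)).card := by
    intro i
    apply Finset.card_bij (fun t _ => (π j i) t)
    · intro t ht; simp only [mem_filter, mem_univ, true_and] at ht ⊢; exact ht
    · intro a _ b _ h; exact (π j i).injective h
    · intro b hb
      refine ⟨(π j i).symm b, ?_, by simp⟩
      simp only [mem_filter, mem_univ, true_and] at hb ⊢
      simpa using hb
  have hcov : (univ.filter (fun t : Fin M => p ℓ ((π j ℓ) t) ≠ 0)).card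
      ≤ ∑ i ∈ I.erase ℓ, (univ.filter (fun t : Fin M => p i ((π j i) t) ≠ 0)).card := by
    calc (univ.filter (fun t : Fin M => p ℓ ((π j ℓ) t) ≠ 0)).card
        ≤ ((I.erase ℓ).biUnion
            (fun i => univ.filter (fun t : Fin M => p i ((π j i) t) ≠ 0))).card := by
          apply Finset.card_le_card
          intro t ht
          simp only [mem_filter, mem_univ, true_and] at ht
          by_contra hcon
          simp only [Finset.mem_biUnion, mem_filter, mem_univ, true_and, not_exists,
            not_and, not_not] at hcon
          have hsum := hp j t
          rw [← hI, Finset.sum_eq_single_of_mem ℓ hℓI] at hsum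
          · exact ht (hnzd j ℓ hℓ _ hsum)
          · intro i hi hne
            rw [hcon i (Finset.mem_erase.mpr ⟨hne, hi⟩), mul_zero]
      _ ≤ _ := Finset.card_biUnion_le
  rw [ge_iff_le, key ℓ, Finset.sum_congr rfl (fun i _ => key i), ← Finset.sum_div]
  gcongr
  push_cast
  calc ((univ.filter (fun t : Fin M => p ℓ t ≠ 0)).card : ℝ)
      = ((univ.filter (fun t : Fin M => p ℓ ((π j ℓ) t) ≠ 0)).card : ℝ) := by
        rw [hperm ℓ]
    _ ≤ ∑ i ∈ I.erase ℓ, ((univ.filter (fun t : Fin M => p i ((π j i) t) ≠ 0)).card : ℝ) := by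
        exact_mod_cast hcov
    _ = _ := by
        apply Finset.sum_congr rfl
        intro i _
        exact_mod_cast congrArg Nat.cast (hperm i)
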